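/- For every a > 0, the upper ν-partition entropy h_a equals 1/α_a, with the extended-real conventions 1/0 = ∞ and 1/∞ = 0 (Proposition 2.3). -/

import Mathlib

open MeasureTheory Filter
open scoped ENNReal

noncomputable section

/-- The half-open unit cube `(0,1]^m`. -/
def unitCube (m : ℕ) : Set (Fin m → ℝ) := {x | ∀ i, x i ∈ Set.Ioc (0 : ℝ) 1}

/-- A half-open axis-parallel cube `∏_i (a_i, a_i + h]` with `h > 0`. -/
def IsHalfOpenCube {m : ℕ} (Q : Set (Fin m → ℝ)) : Prop :=
  ∃ (a : Fin m → ℝ) (h : ℝ), 0 < h ∧ Q = {x | ∀ i, x i ∈ Set.Ioc (a i) (a i + h)}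

/-- A finite partition of the unit cube into half-open axis-parallel subcubes. -/
def IsCubePartition (m : ℕ) (P : Finset (Set (Fin m → ℝ))) : Prop :=
  (∀ Q ∈ P, IsHalfOpenCube Q ∧ Q ⊆ unitCube m) ∧
    (P : Set (Set (Fin m → ℝ))).PairwiseDisjoint id ∧
    ⋃₀ (P : Set (Set (Fin m → ℝ))) = unitCube m

/-- `𝔍_a(Q) = Λ(Q)^a · ν(Q)`. -/
def Jfun (m : ℕ) (ν : Measure (Fin m → ℝ)) (a : ℝ) (Q : Set (Fin m → ℝ)) : ℝ :=
  (volume Q).toReal ^ a * (ν Q).toReal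

/-- `γ_{a,n} = inf_{Ξ ∈ Υ_n} max_{Q ∈ Ξ} 𝔍_a(Q)`, the infimum over partitions of the
unit cube into at most `n` half-open subcubes. -/
def gammaA (m : ℕ) (ν : Measure (Fin m → ℝ)) (a : ℝ) (n : ℕ) : ℝ :=
  sInf {r : ℝ | ∃ P : Finset (Set (Fin m → ℝ)), IsCubePartition m P ∧ P.card ≤ n ∧
    r = sSup (Jfun m ν a '' ↑P)}

/-- `α_a = liminf_n log (1/γ_{a,n}) / log n` in the extended reals
(with `log (1/0) = ∞`). -/
def alphaA (m : ℕ) (ν : Measure (Fin m → ℝ)) (a : ℝ) : ℝ≥0∞ :=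
  liminf (fun n : ℕ => if gammaA m ν a n = 0 then (⊤ : ℝ≥0∞)
    else ENNReal.ofReal (Real.log (1 / gammaA m ν a n) / Real.log n)) atTop

/-- `𝒩_a(t)`: the minimal cardinality of a partition of the unit cube into half-open
cubes `Q`, all satisfying `𝔍_a(Q) < 1/t`. -/
def partCount (m : ℕ) (ν : Measure (Fin m → ℝ)) (a t : ℝ) : ℕ :=
  sInf {k : ℕ | ∃ P : Finset (Set (Fin m → ℝ)), IsCubePartition m P ∧
    (∀ Q ∈ P, Jfun m ν a Q < 1 / t) ∧ P.card = k}

/-- The upper `ν`-partition entropy `h_a = limsup_{t → ∞} log 𝒩_a(t) / log t`. -/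
def hPart (m : ℕ) (ν : Measure (Fin m → ℝ)) (a : ℝ) : ℝ≥0∞ :=
  limsup (fun t : ℝ => ENNReal.ofReal (Real.log (partCount m ν a t) / Real.log t)) atTop

namespace AuxPE

variable {m : ℕ} {ν : Measure (Fin m → ℝ)} {a t : ℝ} {n : ℕ}

lemma unitCube_nonempty (m : ℕ) : (unitCube m).Nonempty :=
  ⟨fun _ => 1, fun _ => ⟨one_pos, le_refl 1⟩⟩

lemma part_nonempty {P : Finset (Set (Fin m → ℝ))} (hP : IsCubePartition m P) : P.Nonempty := by
  rcases unitCube_nonempty m with ⟨x, hx⟩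
  rw [← hP.2.2] at hx
  rcases hx with ⟨Q, hQ, -⟩
  exact ⟨Q, hQ⟩

lemma Jfun_nonneg (Q : Set (Fin m → ℝ)) : 0 ≤ Jfun m ν a Q :=
  mul_nonneg (Real.rpow_nonneg ENNReal.toReal_nonneg a) ENNReal.toReal_nonneg

lemma unitCube_eq_pi (m : ℕ) :
    unitCube m = Set.pi Set.univ (fun _ : Fin m => Set.Ioc (0:ℝ) 1) := by
  ext x; simp [unitCube, Set.mem_pi]

lemma volume_unitCube (m : ℕ) : volume (unitCube m) = 1 := by
  rw [unitCube_eq_pi, volume_pi_pi]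
  simp [Real.volume_Ioc]

lemma nu_toReal_le_one [IsProbabilityMeasure ν] (Q : Set (Fin m → ℝ)) : (ν Q).toReal ≤ 1 := by
  have := prob_le_one (μ := ν) (s := Q)
  calc (ν Q).toReal ≤ (1 : ℝ≥0∞).toReal := ENNReal.toReal_mono ENNReal.one_ne_top this
    _ = 1 := by simp

lemma Jfun_le_one [IsProbabilityMeasure ν] (ha : 0 ≤ a) {Q : Set (Fin m → ℝ)}
    (hQ : Q ⊆ unitCube m) : Jfun m ν a Q ≤ 1 := by
  have hvol : volume Q ≤ 1 := by
    rw [← volume_unitCube m]; exact measure_mono hQ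
  have h1 : (volume Q).toReal ≤ 1 := by
    calc (volume Q).toReal ≤ (1 : ℝ≥0∞).toReal := ENNReal.toReal_mono ENNReal.one_ne_top hvol
      _ = 1 := by simp
  have h2 : (volume Q).toReal ^ a ≤ 1 :=
    Real.rpow_le_one ENNReal.toReal_nonneg h1 ha
  calc Jfun m ν a Q ≤ 1 * 1 :=
        mul_le_mul h2 (nu_toReal_le_one Q) ENNReal.toReal_nonneg zero_le_one
    _ = 1 := one_mul 1

lemma unitCube_isCube (m : ℕ) : IsHalfOpenCube (unitCube m) :=
  ⟨fun _ => 0, 1, one_pos, by simp [unitCube]⟩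

lemma singleton_partition (m : ℕ) : IsCubePartition m {unitCube m} := by
  refine ⟨?_, ?_, ?_⟩
  · intro Q hQ
    simp only [Finset.mem_singleton] at hQ
    subst hQ
    exact ⟨unitCube_isCube m, subset_rfl⟩
  · simp [Set.PairwiseDisjoint]
  · simp

end AuxPE

namespace AuxPE

variable {m k : ℕ}

/-- One cell of the uniform grid of mesh `1/k`. -/
def gridCube (m k : ℕ) (c : Fin m → Fin k) : Set (Fin m → ℝ) :=
  {x | ∀ i, x i ∈ Set.Ioc ((c i : ℝ)/k) ((c i : ℝ)/k + 1/k)}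

lemma gridCube_isCube (hk : 0 < k) (c : Fin m → Fin k) : IsHalfOpenCube (gridCube m k c) :=
  ⟨fun i => (c i : ℝ)/k, 1/k, by positivity, rfl⟩

lemma gridCube_subset (c : Fin m → Fin k) : gridCube m k c ⊆ unitCube m := by
  intro x hx i
  have hk : 0 < (k : ℝ) := by
    have := (c i).2
    exact_mod_cast Nat.pos_of_ne_zero (fun h => by subst h; exact (c i).elim0)
  have h1 := (hx i).1
  have h2 := (hx i).2
  constructor
  · have h0 : (0:ℝ) ≤ (c i : ℝ)/k := by positivity
    linarith
  · have hcl : ((c i : ℕ) : ℝ) + 1 ≤ (k : ℝ) := by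
      exact_mod_cast Nat.succ_le_of_lt (c i).2
    have : (c i : ℝ)/k + 1/k = (((c i : ℕ) : ℝ) + 1)/k := by ring
    rw [this] at h2
    calc x i ≤ (((c i : ℕ) : ℝ) + 1)/k := h2
      _ ≤ (k : ℝ)/k := by exact (div_le_div_iff_of_pos_right hk).mpr hcl
      _ = 1 := div_self (ne_of_gt hk)
  
lemma gridCube_corner_mem (hk : 0 < k) (c : Fin m → Fin k) :
    (fun i => (c i : ℝ)/k + 1/k) ∈ gridCube m k c := by
  intro i
  have hk' : 0 < (k:ℝ) := by exact_mod_cast hk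
  constructor
  · have : (0:ℝ) < 1/k := by positivity
    linarith
  · exact le_refl _

lemma gridCube_disjoint (hk : 0 < k) {c c' : Fin m → Fin k} (h : c ≠ c') :
    Disjoint (gridCube m k c) (gridCube m k c') := by
  rw [Set.disjoint_left]
  intro x hx hx'
  apply h
  funext i
  by_contra hne
  have hk' : 0 < (k:ℝ) := by exact_mod_cast hk
  rcases lt_or_gt_of_ne (fun hh : (c i : ℕ) = (c' i : ℕ) => hne (Fin.ext hh)) with hlt | hlt
  · have hcl : ((c i : ℕ) : ℝ) + 1 ≤ ((c' i : ℕ) : ℝ) := by exact_mod_cast hlt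
    have h1 := (hx i).2
    have h2 := (hx' i).1
    have : x i ≤ (((c i : ℕ) : ℝ) + 1)/k := by
      calc x i ≤ (c i : ℝ)/k + 1/k := h1
        _ = (((c i : ℕ) : ℝ) + 1)/k := by ring
    have h3 : (((c i : ℕ) : ℝ) + 1)/k ≤ ((c' i : ℕ) : ℝ)/k := (div_le_div_iff_of_pos_right hk').mpr hcl
    linarith [this, h3, h2]
  · have hcl : ((c' i : ℕ) : ℝ) + 1 ≤ ((c i : ℕ) : ℝ) := by exact_mod_cast hlt
    have h1 := (hx' i).2
    have h2 := (hx i).1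
    have : x i ≤ (((c' i : ℕ) : ℝ) + 1)/k := by
      calc x i ≤ (c' i : ℝ)/k + 1/k := h1
        _ = (((c' i : ℕ) : ℝ) + 1)/k := by ring
    have h3 : (((c' i : ℕ) : ℝ) + 1)/k ≤ ((c i : ℕ) : ℝ)/k := (div_le_div_iff_of_pos_right hk').mpr hcl
    linarith

lemma gridCube_injective (hk : 0 < k) : Function.Injective (gridCube m k) := by
  intro c c' hcc
  by_contra h
  have hd := gridCube_disjoint hk h
  rw [hcc] at hd
  have hmem := gridCube_corner_mem hk c'
  exact Set.disjoint_left.1 hd hmem hmem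

lemma gridCube_cover (hk : 0 < k) {x : Fin m → ℝ} (hx : x ∈ unitCube m) :
    ∃ c : Fin m → Fin k, x ∈ gridCube m k c := by
  have hk' : 0 < (k:ℝ) := by exact_mod_cast hk
  have hceil : ∀ i, 1 ≤ ⌈x i * k⌉₊ := by
    intro i
    rw [Nat.one_le_ceil_iff]
    exact mul_pos (hx i).1 hk'
  have hle : ∀ i, ⌈x i * k⌉₊ ≤ k := by
    intro i
    rw [Nat.ceil_le]
    calc x i * k ≤ 1 * k := by
          apply mul_le_mul_of_nonneg_right (hx i).2 (le_of_lt hk')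
      _ = (k:ℝ) := one_mul _
  refine ⟨fun i => ⟨⌈x i * k⌉₊ - 1, by have h1 := hceil i; have h2 := hle i; omega⟩, ?_⟩
  intro i
  have hc : ((⌈x i * k⌉₊ - 1 : ℕ) : ℝ) = (⌈x i * k⌉₊ : ℝ) - 1 := by
    have := hceil i
    push_cast [Nat.cast_sub this]
    ring
  simp only [gridCube, Set.mem_setOf_eq, Set.mem_Ioc]
  constructor
  · rw [hc]
    rw [div_lt_iff₀ hk']
    have := Nat.ceil_lt_add_one (le_of_lt (mul_pos (hx i).1 hk'))
    linarith
  · rw [hc]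
    rw [show ((⌈x i * k⌉₊:ℝ) - 1)/k + 1/k = (⌈x i * k⌉₊:ℝ)/k by ring, le_div_iff₀ hk']
    exact Nat.le_ceil _

lemma gridCube_volume (hk : 0 < k) (c : Fin m → Fin k) :
    volume (gridCube m k c) = ENNReal.ofReal ((1:ℝ)/k) ^ m := by
  have hpi : gridCube m k c
      = Set.pi Set.univ (fun i => Set.Ioc ((c i : ℝ)/k) ((c i : ℝ)/k + 1/k)) := by
    ext x; simp [gridCube, Set.mem_pi]
  rw [hpi, volume_pi_pi]
  simp [Real.volume_Ioc]

/-- The uniform grid partition of the unit cube into `k ^ m` cells. -/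
lemma grid_partition (m : ℕ) (hk : 0 < k) :
    ∃ P : Finset (Set (Fin m → ℝ)), IsCubePartition m P ∧ P.card = k ^ m ∧
      ∀ Q ∈ P, volume Q = ENNReal.ofReal ((1:ℝ)/k) ^ m := by
  classical
  refine ⟨Finset.image (gridCube m k) Finset.univ, ⟨?_, ?_, ?_⟩, ?_, ?_⟩
  · intro Q hQ
    rcases Finset.mem_image.1 hQ with ⟨c, -, rfl⟩
    exact ⟨gridCube_isCube hk c, gridCube_subset c⟩
  · intro Q hQ Q' hQ' hne
    simp only [Finset.coe_image, Set.mem_image] at hQ hQ'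
    rcases hQ with ⟨c, -, rfl⟩
    rcases hQ' with ⟨c', -, rfl⟩
    exact gridCube_disjoint hk (fun h => hne (by rw [h]))
  · apply Set.Subset.antisymm
    · intro x hx
      rcases hx with ⟨Q, hQ, hxQ⟩
      simp only [Finset.coe_image, Set.mem_image] at hQ
      rcases hQ with ⟨c, -, rfl⟩
      exact gridCube_subset c hxQ
    · intro x hx
      rcases gridCube_cover hk hx with ⟨c, hc⟩
      exact ⟨gridCube m k c, by simp, hc⟩
  · rw [Finset.card_image_of_injective _ (gridCube_injective hk), Finset.card_univ]
    simp [Fintype.card_fun]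
  · intro Q hQ
    rcases Finset.mem_image.1 hQ with ⟨c, -, rfl⟩
    exact gridCube_volume hk c

end AuxPE

namespace AuxPE

variable {m k n n' : ℕ} {ν : Measure (Fin m → ℝ)} {a t : ℝ}

/-- The defining set for `gammaA`. -/
def gammaSet (m : ℕ) (ν : Measure (Fin m → ℝ)) (a : ℝ) (n : ℕ) : Set ℝ :=
  {r : ℝ | ∃ P : Finset (Set (Fin m → ℝ)), IsCubePartition m P ∧ P.card ≤ n ∧
    r = sSup (Jfun m ν a '' ↑P)}

lemma gammaA_eq_sInf : gammaA m ν a n = sInf (gammaSet m ν a n) := rfl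

lemma sSup_J_mem {P : Finset (Set (Fin m → ℝ))} (hP : IsCubePartition m P) :
    sSup (Jfun m ν a '' ↑P) ∈ Jfun m ν a '' ↑P := by
  apply Set.Nonempty.csSup_mem
  · exact (Set.image_nonempty.2 (Finset.coe_nonempty.2 (part_nonempty hP)))
  · exact (P.finite_toSet.image _)

lemma gammaSet_nonneg {r : ℝ} (hr : r ∈ gammaSet m ν a n) : 0 ≤ r := by
  rcases hr with ⟨P, hP, -, rfl⟩
  rcases sSup_J_mem (ν := ν) (a := a) hP with ⟨Q, -, hQ⟩
  rw [← hQ]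
  exact Jfun_nonneg Q

lemma gammaSet_bddBelow : BddBelow (gammaSet m ν a n) :=
  ⟨0, fun _ hr => gammaSet_nonneg hr⟩

lemma gammaA_nonneg : 0 ≤ gammaA m ν a n := by
  rcases Set.eq_empty_or_nonempty (gammaSet m ν a n) with h | h
  · rw [gammaA_eq_sInf, h]; simp [Real.sInf_empty]
  · exact le_csInf h fun _ hr => gammaSet_nonneg hr

lemma gammaSet_nonempty (hn : 1 ≤ n) : (gammaSet m ν a n).Nonempty :=
  ⟨_, {unitCube m}, singleton_partition m, by simpa using hn, rfl⟩

lemma gammaA_le_sSup {P : Finset (Set (Fin m → ℝ))} (hP : IsCubePartition m P)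
    (hc : P.card ≤ n) : gammaA m ν a n ≤ sSup (Jfun m ν a '' ↑P) :=
  csInf_le gammaSet_bddBelow ⟨P, hP, hc, rfl⟩

lemma gammaA_antitone (hn : 1 ≤ n) (hnn : n ≤ n') : gammaA m ν a n' ≤ gammaA m ν a n :=
  csInf_le_csInf gammaSet_bddBelow (gammaSet_nonempty hn)
    (fun r => fun ⟨P, hP, hc, hr⟩ => ⟨P, hP, hc.trans hnn, hr⟩)

lemma gammaA_le_one [IsProbabilityMeasure ν] (ha : 0 ≤ a) (hn : 1 ≤ n) :
    gammaA m ν a n ≤ 1 := by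
  refine (gammaA_le_sSup (singleton_partition m) (by simpa using hn)).trans ?_
  rw [Finset.coe_singleton, Set.image_singleton, csSup_singleton]
  exact Jfun_le_one ha subset_rfl

/-- Upper bound for `Jfun` on a grid cell. -/
lemma Jfun_grid_le [IsProbabilityMeasure ν] (ha : 0 ≤ a) {Q : Set (Fin m → ℝ)}
    (hvol : volume Q = ENNReal.ofReal ((1:ℝ)/k) ^ m) (hk : 0 < k) :
    Jfun m ν a Q ≤ (((1:ℝ)/k) ^ m) ^ a := by
  have hk' : (0:ℝ) ≤ 1/k := by positivity
  have htR : (volume Q).toReal = ((1:ℝ)/k) ^ m := by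
    rw [hvol, ENNReal.toReal_pow, ENNReal.toReal_ofReal hk']
  rw [Jfun, htR]
  calc (((1:ℝ)/k) ^ m) ^ a * (ν Q).toReal ≤ (((1:ℝ)/k) ^ m) ^ a * 1 := by
        apply mul_le_mul_of_nonneg_left (nu_toReal_le_one Q)
        exact Real.rpow_nonneg (by positivity) a
    _ = (((1:ℝ)/k) ^ m) ^ a := mul_one _

lemma gammaA_grid_le [IsProbabilityMeasure ν] (ha : 0 ≤ a) (hk : 0 < k) :
    gammaA m ν a (k ^ m) ≤ (((1:ℝ)/k) ^ m) ^ a := by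
  rcases grid_partition m hk with ⟨P, hP, hcard, hvol⟩
  refine (gammaA_le_sSup hP (le_of_eq hcard)).trans ?_
  rcases sSup_J_mem (ν := ν) (a := a) hP with ⟨Q, hQ, hQs⟩
  rw [← hQs]
  exact Jfun_grid_le ha (hvol Q hQ) hk

/-- The grid bound tends to `0`. -/
lemma tendsto_gridBound (hm : 0 < m) (ha : 0 < a) :
    Tendsto (fun k : ℕ => (((1:ℝ)/k) ^ m) ^ a) atTop (nhds 0) := by
  have h1 : Tendsto (fun k : ℕ => ((k:ℝ) ^ m) ^ a) atTop atTop := by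
    apply (tendsto_rpow_atTop ha).comp
    exact (tendsto_pow_atTop (Nat.pos_iff_ne_zero.1 hm)).comp tendsto_natCast_atTop_atTop
  have h2 : Tendsto (fun k : ℕ => (((k:ℝ) ^ m) ^ a)⁻¹) atTop (nhds 0) :=
    h1.inv_tendsto_atTop
  apply h2.congr'
  filter_upwards [eventually_ge_atTop 1] with k hk
  have hk' : (0:ℝ) < k := by exact_mod_cast hk
  rw [← Real.rpow_natCast ((k:ℝ)) m, ← Real.rpow_natCast ((1:ℝ)/k) m, one_div,
    ← Real.rpow_neg_one (k:ℝ), ← Real.rpow_mul hk'.le, ← Real.rpow_mul hk'.le,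
    ← Real.rpow_mul hk'.le, ← Real.rpow_neg hk'.le]
  ring_nf

/-- `γ` is eventually below any positive `ε`. -/
lemma gammaA_eventually_lt [IsProbabilityMeasure ν] (hm : 0 < m) (ha : 0 < a)
    {ε : ℝ} (hε : 0 < ε) : ∃ M : ℕ, 1 ≤ M ∧ ∀ n ≥ M, gammaA m ν a n < ε := by
  have := (tendsto_gridBound (m := m) hm ha).eventually (eventually_lt_nhds hε)
  rcases (this.and (eventually_ge_atTop 1)).exists with ⟨k, hklt, hk1⟩
  have hk : 0 < k := hk1
  refine ⟨k ^ m, Nat.one_le_iff_ne_zero.2 (pow_ne_zero m (by omega)), fun n hn => ?_⟩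
  calc gammaA m ν a n ≤ gammaA m ν a (k ^ m) :=
        gammaA_antitone (Nat.one_le_iff_ne_zero.2 (pow_ne_zero m (by omega))) hn
    _ ≤ (((1:ℝ)/k) ^ m) ^ a := gammaA_grid_le ha.le hk
    _ < ε := hklt

end AuxPE

namespace AuxPE

variable {m k n : ℕ} {ν : Measure (Fin m → ℝ)} {a t : ℝ}

/-- The defining set for `partCount`. -/
def pcSet (m : ℕ) (ν : Measure (Fin m → ℝ)) (a t : ℝ) : Set ℕ :=
  {k : ℕ | ∃ P : Finset (Set (Fin m → ℝ)), IsCubePartition m P ∧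
    (∀ Q ∈ P, Jfun m ν a Q < 1 / t) ∧ P.card = k}

lemma partCount_eq_sInf : partCount m ν a t = sInf (pcSet m ν a t) := rfl

lemma pcSet_nonempty [IsProbabilityMeasure ν] (hm : 0 < m) (ha : 0 < a) (ht : 0 < t) :
    (pcSet m ν a t).Nonempty := by
  have h0 : (0:ℝ) < 1/t := by positivity
  have := (tendsto_gridBound (m := m) hm ha).eventually (eventually_lt_nhds h0)
  rcases (this.and (eventually_ge_atTop 1)).exists with ⟨k, hklt, hk1⟩
  have hk : 0 < k := hk1
  rcases grid_partition m hk with ⟨P, hP, hcard, hvol⟩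
  exact ⟨P.card, P, hP, fun Q hQ => lt_of_le_of_lt (Jfun_grid_le ha.le (hvol Q hQ) hk) hklt, rfl⟩

lemma partCount_spec [IsProbabilityMeasure ν] (hm : 0 < m) (ha : 0 < a) (ht : 0 < t) :
    ∃ P : Finset (Set (Fin m → ℝ)), IsCubePartition m P ∧
      (∀ Q ∈ P, Jfun m ν a Q < 1 / t) ∧ P.card = partCount m ν a t :=
  Nat.sInf_mem (pcSet_nonempty hm ha ht)

lemma one_le_partCount [IsProbabilityMeasure ν] (hm : 0 < m) (ha : 0 < a) (ht : 0 < t) :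
    1 ≤ partCount m ν a t := by
  rcases partCount_spec (ν := ν) (a := a) hm ha ht with ⟨P, hP, -, hcard⟩
  rw [← hcard]
  exact Finset.card_pos.2 (part_nonempty hP)

lemma gammaA_partCount_lt [IsProbabilityMeasure ν] (hm : 0 < m) (ha : 0 < a) (ht : 0 < t) :
    gammaA m ν a (partCount m ν a t) < 1 / t := by
  rcases partCount_spec (ν := ν) (a := a) hm ha ht with ⟨P, hP, hlt, hcard⟩
  refine lt_of_le_of_lt (gammaA_le_sSup hP (le_of_eq hcard)) ?_
  rcases sSup_J_mem (ν := ν) (a := a) hP with ⟨Q, hQ, hQs⟩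
  rw [← hQs]
  exact hlt Q hQ

lemma partCount_le_of_gammaA_lt (hn : 1 ≤ n) (h : gammaA m ν a n < 1 / t) :
    partCount m ν a t ≤ n := by
  rcases exists_lt_of_csInf_lt (gammaSet_nonempty hn) h with ⟨r, ⟨P, hP, hc, rfl⟩, hr⟩
  refine le_trans (Nat.sInf_le ⟨P, hP, fun Q hQ => ?_, rfl⟩) hc
  refine lt_of_le_of_lt ?_ hr
  exact le_csSup ((P.finite_toSet.image _).bddAbove) ⟨Q, hQ, rfl⟩

lemma lt_partCount [IsProbabilityMeasure ν] (hm : 0 < m) (ha : 0 < a) (ht : 0 < t)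
    (h : 1 / t < gammaA m ν a n) : n < partCount m ν a t := by
  by_contra hc
  push_neg at hc
  have h1 : 1 ≤ partCount m ν a t := one_le_partCount hm ha ht
  have h3 : gammaA m ν a n ≤ gammaA m ν a (partCount m ν a t) :=
    gammaA_antitone (ν := ν) (a := a) h1 hc
  have h2 := gammaA_partCount_lt (ν := ν) (a := a) hm ha ht
  linarith

/-- In the everywhere-positive case, `partCount` tends to infinity. -/
lemma partCount_tendsto [IsProbabilityMeasure ν] (hm : 0 < m) (ha : 0 < a)
    (hpos : ∀ n : ℕ, 1 ≤ n → 0 < gammaA m ν a n) :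
    Tendsto (fun t : ℝ => partCount m ν a t) atTop atTop := by
  rw [tendsto_atTop]
  intro b
  have hb1 : 1 ≤ max b 1 := le_max_right _ _
  have hg := hpos (max b 1) hb1
  filter_upwards [eventually_gt_atTop (max (1 / gammaA m ν a (max b 1)) 0)] with t ht
  have ht0 : 0 < t := lt_of_le_of_lt (le_max_right _ _) ht
  have ht1 : 1 / gammaA m ν a (max b 1) < t := lt_of_le_of_lt (le_max_left _ _) ht
  have : 1 / t < gammaA m ν a (max b 1) := by
    rw [div_lt_iff₀ ht0]
    rw [div_lt_iff₀ hg] at ht1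
    linarith [mul_comm t (gammaA m ν a (max b 1))]
  have := lt_partCount hm ha ht0 this
  calc b ≤ max b 1 := le_max_left _ _
    _ ≤ partCount m ν a t := this.le

/-- `log (1/γ n) → ∞` in the positive case. -/
lemma tendsto_log_inv_gammaA [IsProbabilityMeasure ν] (hm : 0 < m) (ha : 0 < a)
    (hpos : ∀ n : ℕ, 1 ≤ n → 0 < gammaA m ν a n) :
    Tendsto (fun n : ℕ => Real.log (1 / gammaA m ν a n)) atTop atTop := by
  rw [tendsto_atTop]
  intro b
  rcases gammaA_eventually_lt (ν := ν) hm ha (Real.exp_pos (-b)) with ⟨M, hM1, hM⟩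
  filter_upwards [eventually_ge_atTop (max M 1)] with n hn
  have hn1 : 1 ≤ n := le_trans (le_max_right _ _) hn
  have hγpos := hpos n hn1
  have hlt : gammaA m ν a n < Real.exp (-b) := hM n (le_trans (le_max_left _ _) hn)
  have : Real.exp b < 1 / gammaA m ν a n := by
    rw [lt_div_iff₀ hγpos]
    calc Real.exp b * gammaA m ν a n < Real.exp b * Real.exp (-b) := by
          apply mul_lt_mul_of_pos_left hlt (Real.exp_pos b)
      _ = Real.exp (b + -b) := (Real.exp_add b (-b)).symm
      _ = 1 := by rw [add_neg_cancel, Real.exp_zero]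
  calc b = Real.log (Real.exp b) := (Real.log_exp b).symm
    _ ≤ Real.log (1 / gammaA m ν a n) := Real.log_le_log (Real.exp_pos b) this.le

end AuxPE

namespace AuxPE

lemma comp_limsup_le {α β : Type*} [Nonempty α] [SemilatticeSup α]
    (g : α → ℝ≥0∞) {v : β → α} {l : Filter β} (hv : Tendsto v l atTop) :
    limsup (fun t => g (v t)) l ≤ limsup g atTop := by
  have h1 : map (fun t => g (v t)) l = map g (map v l) := (map_map).symm
  show limsSup (map (fun t => g (v t)) l) ≤ limsSup (map g atTop)
  rw [h1]
  exact limsSup_le_limsSup_of_le (map_mono hv)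

lemma le_of_forall_one_add_mul {x y : ℝ≥0∞}
    (h : ∀ ε : ℝ, 0 < ε → x ≤ ENNReal.ofReal (1 + ε) * y) : x ≤ y := by
  by_cases hy : y = ⊤
  · simp [hy]
  · have h1 : Tendsto (fun j : ℕ => 1 + 1/((j:ℝ)+1)) atTop (nhds 1) := by
      have := tendsto_one_div_add_atTop_nhds_zero_nat (𝕜 := ℝ)
      simpa using tendsto_const_nhds.add this
    have h2 : Tendsto (fun j : ℕ => ENNReal.ofReal (1 + 1/((j:ℝ)+1)) * y) atTop
        (nhds (1 * y)) := by
      apply ENNReal.Tendsto.mul_const _ (Or.inr hy)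
      have := (ENNReal.continuous_ofReal.tendsto 1).comp h1
      simpa [Function.comp_def] using this
    rw [one_mul] at h2
    exact ge_of_tendsto' h2 (fun j => h _ (by positivity))

lemma le_of_forall_one_sub_mul {x y : ℝ≥0∞}
    (h : ∀ ε : ℝ, 0 < ε → ε < 1 → ENNReal.ofReal (1 - ε) * x ≤ y) : x ≤ y := by
  apply ENNReal.le_of_forall_lt_one_mul_le
  intro c hc
  by_cases hc0 : c = 0
  · simp [hc0]
  · have hct : c ≠ ⊤ := ne_top_of_lt hc
    have hc1 : c.toReal < 1 := by
      have := (ENNReal.toReal_lt_toReal hct ENNReal.one_ne_top).mpr hc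
      simpa using this
    have hcpos : 0 < c.toReal := ENNReal.toReal_pos hc0 hct
    have hεpos : 0 < 1 - c.toReal := by linarith
    have hεlt : 1 - c.toReal < 1 := by linarith
    have hce : ENNReal.ofReal (1 - (1 - c.toReal)) = c := by
      rw [show 1 - (1 - c.toReal) = c.toReal by ring, ENNReal.ofReal_toReal hct]
    calc c * x = ENNReal.ofReal (1 - (1 - c.toReal)) * x := by rw [hce]
      _ ≤ y := h _ hεpos hεlt

end AuxPE

open AuxPE in
/-- **Proposition 2.3**: `h_a = 1/α_a`, with the extended-real conventions
`1/0 = ∞` and `1/∞ = 0`. -/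
theorem statement2 (m : ℕ) (hm : 0 < m) (ν : Measure (Fin m → ℝ))
    [IsProbabilityMeasure ν] (hν : ν (unitCube m) = 1) (a : ℝ) (ha : 0 < a) :
    hPart m ν a = (alphaA m ν a)⁻¹ := by
  classical
  have hHeq : hPart m ν a
      = limsup (fun t : ℝ =>
          ENNReal.ofReal (Real.log (partCount m ν a t) / Real.log t)) atTop := rfl
  by_cases hpos : ∀ n : ℕ, 1 ≤ n → 0 < gammaA m ν a n
  · -- main case: γ is always positive
    set L : ℕ → ℝ := fun n => Real.log (1 / gammaA m ν a n) with hLdef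
    set Dl : ℕ → ℝ := fun n => L n / Real.log n with hDdef
    set W : ℕ → ℝ≥0∞ := fun n => (ENNReal.ofReal (Dl n))⁻¹ with hWdef
    have hαeq : alphaA m ν a = liminf (fun n : ℕ => ENNReal.ofReal (Dl n)) atTop := by
      apply liminf_congr
      filter_upwards [eventually_ge_atTop 1] with n hn
      rw [if_neg (ne_of_gt (hpos n hn))]
    have hgoal : (alphaA m ν a)⁻¹ = limsup W atTop := by
      rw [hαeq, ENNReal.inv_liminf]
    rw [hgoal, hHeq]
    have htendN : Tendsto (fun t : ℝ => partCount m ν a t) atTop atTop :=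
      partCount_tendsto hm ha hpos
    have hLtop : Tendsto L atTop atTop := tendsto_log_inv_gammaA hm ha hpos
    have hlogN : Tendsto (fun n : ℕ => Real.log n) atTop atTop :=
      Real.tendsto_log_atTop.comp tendsto_natCast_atTop_atTop
    apply le_antisymm
    · -- upper bound
      apply le_of_forall_one_add_mul
      intro ε hε
      have hev_n : ∀ᶠ n : ℕ in atTop,
          1 ≤ L n ∧ Real.log ((n:ℝ) + 1) ≤ (1 + ε) * Real.log n ∧ 2 ≤ n := by
        filter_upwards [hLtop.eventually_ge_atTop 1,
          hlogN.eventually_ge_atTop (Real.log 2 / ε), eventually_ge_atTop 2] with n hL1 hlg h2n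
        refine ⟨hL1, ?_, h2n⟩
        have hn1 : (1:ℝ) ≤ (n:ℝ) := by exact_mod_cast le_trans one_le_two h2n
        have hup : Real.log ((n:ℝ) + 1) ≤ Real.log 2 + Real.log n := by
          have h2n' : (n:ℝ) + 1 ≤ 2 * n := by linarith
          calc Real.log ((n:ℝ) + 1) ≤ Real.log (2 * n) :=
                Real.log_le_log (by linarith) h2n'
            _ = Real.log 2 + Real.log n := Real.log_mul two_ne_zero (by linarith)
        have hl2 : Real.log 2 ≤ ε * Real.log n := by
          rw [div_le_iff₀ hε] at hlg
          linarith [mul_comm ε (Real.log n)]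
        linarith
      obtain ⟨M0, hM0⟩ := eventually_atTop.1 hev_n
      have hev_t : ∀ᶠ t : ℝ in atTop,
          ENNReal.ofReal (Real.log (partCount m ν a t) / Real.log t)
            ≤ ENNReal.ofReal (1 + ε) * W (partCount m ν a t - 1) := by
        filter_upwards [htendN.eventually_ge_atTop (M0 + 2), eventually_gt_atTop 0]
          with t hNt ht0
        set n := partCount m ν a t with hn
        set M := n - 1 with hMdef
        have hM0le : M0 ≤ M := by omega
        have hM1 : 1 ≤ M := by omega
        obtain ⟨hLM, hlogM1, h2M⟩ := hM0 M hM0le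
        have hMn : M + 1 = n := by omega
        have hγMpos := hpos M hM1
        have hγM : 1 / t ≤ gammaA m ν a M := by
          by_contra hcon
          push_neg at hcon
          have := partCount_le_of_gammaA_lt hM1 hcon
          omega
        have hLlog : L M ≤ Real.log t := by
          apply Real.log_le_log (by positivity)
          rw [div_le_iff₀ hγMpos]
          rw [div_le_iff₀ ht0] at hγM
          linarith [mul_comm t (gammaA m ν a M)]
        have hLMpos : (0:ℝ) < L M := lt_of_lt_of_le one_pos hLM
        have hlogMpos : 0 < Real.log M := Real.log_pos (by exact_mod_cast h2M)
        have hchain : Real.log n / Real.log t ≤ (1 + ε) * (Real.log M / L M) := by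
          have hnM : (n:ℝ) = (M:ℝ) + 1 := by exact_mod_cast hMn.symm
          have hlogn_nonneg : 0 ≤ Real.log n := by
            apply Real.log_nonneg
            have : (1:ℕ) ≤ n := by omega
            exact_mod_cast this
          have h1 : Real.log n / Real.log t ≤ Real.log n / L M :=
            div_le_div_of_nonneg_left hlogn_nonneg hLMpos hLlog
          have h2 : Real.log n ≤ (1 + ε) * Real.log M := by rw [hnM]; exact hlogM1
          calc Real.log n / Real.log t ≤ Real.log n / L M := h1
            _ ≤ ((1 + ε) * Real.log M) / L M := by
                exact (div_le_div_iff_of_pos_right hLMpos).mpr h2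
            _ = (1 + ε) * (Real.log M / L M) := by ring
        have hDpos : 0 < Dl M := div_pos hLMpos hlogMpos
        have hW : ENNReal.ofReal (Real.log M / L M) = W M := by
          rw [hWdef]
          simp only []
          rw [← ENNReal.ofReal_inv_of_pos hDpos]
          congr 1
          simp only [hDdef, inv_div]
        calc ENNReal.ofReal (Real.log n / Real.log t)
            ≤ ENNReal.ofReal ((1 + ε) * (Real.log M / L M)) :=
              ENNReal.ofReal_le_ofReal hchain
          _ = ENNReal.ofReal (1 + ε) * ENNReal.ofReal (Real.log M / L M) :=
              ENNReal.ofReal_mul (by positivity)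
          _ = ENNReal.ofReal (1 + ε) * W M := by rw [hW]
      have hNsub : Tendsto (fun t : ℝ => partCount m ν a t - 1) atTop atTop := by
        rw [tendsto_atTop]
        intro b
        filter_upwards [htendN.eventually_ge_atTop (b + 1)] with t ht
        omega
      calc limsup (fun t : ℝ =>
            ENNReal.ofReal (Real.log (partCount m ν a t) / Real.log t)) atTop
          ≤ limsup (fun t : ℝ =>
              ENNReal.ofReal (1 + ε) * W (partCount m ν a t - 1)) atTop :=
            limsup_le_limsup hev_t
        _ = ENNReal.ofReal (1 + ε) * limsup (fun t : ℝ => W (partCount m ν a t - 1)) atTop :=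
            ENNReal.limsup_const_mul_of_ne_top ENNReal.ofReal_ne_top
        _ ≤ ENNReal.ofReal (1 + ε) * limsup W atTop :=
            mul_le_mul_right (comp_limsup_le W hNsub) _
    · -- lower bound
      apply le_of_forall_one_sub_mul
      intro ε hε hε1
      set T : ℕ → ℝ := fun n => 2 / gammaA m ν a n with hTdef
      have hTtend : Tendsto T atTop atTop := by
        rw [tendsto_atTop]
        intro b
        have hb' : (0:ℝ) < 2 / max b 1 := by positivity
        rcases gammaA_eventually_lt (ν := ν) hm ha hb' with ⟨M, hM1, hM⟩
        filter_upwards [eventually_ge_atTop (max M 1)] with n hn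
        have hn1 : 1 ≤ n := le_trans (le_max_right _ _) hn
        have hγn := hpos n hn1
        have hlt := hM n (le_trans (le_max_left _ _) hn)
        have hmax : (0:ℝ) < max b 1 := lt_of_lt_of_le one_pos (le_max_right _ _)
        have : max b 1 < T n := by
          rw [hTdef]
          simp only []
          rw [lt_div_iff₀ hγn]
          rw [lt_div_iff₀ hmax] at hlt
          linarith [mul_comm (gammaA m ν a n) (max b 1)]
        calc b ≤ max b 1 := le_max_left _ _
          _ ≤ T n := this.le
      have hev : ∀ᶠ n : ℕ in atTop, ENNReal.ofReal (1 - ε) * W n ≤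
          ENNReal.ofReal (Real.log (partCount m ν a (T n)) / Real.log (T n)) := by
        filter_upwards [hLtop.eventually_ge_atTop 1,
          hLtop.eventually_ge_atTop ((1 - ε) * Real.log 2 / ε), eventually_ge_atTop 2]
          with n hL1 hL2 h2n
        have hn1 : 1 ≤ n := by omega
        have hγpos := hpos n hn1
        have hγ1 : gammaA m ν a n ≤ 1 := gammaA_le_one ha.le hn1
        have hT2 : (2:ℝ) ≤ T n := by
          rw [hTdef]
          simp only []
          rw [le_div_iff₀ hγpos]
          nlinarith
        have hTpos : (0:ℝ) < T n := by linarith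
        have hNn : n + 1 ≤ partCount m ν a (T n) := by
          have h1T : 1 / T n < gammaA m ν a n := by
            have heq : 1 / T n = gammaA m ν a n / 2 := by
              rw [hTdef]; simp only []; rw [one_div_div]
            rw [heq]; linarith
          exact lt_partCount hm ha hTpos h1T
        have hLpos : (0:ℝ) < L n := lt_of_lt_of_le one_pos hL1
        have hlogT : Real.log (T n) = Real.log 2 + L n := by
          rw [hTdef]
          simp only []
          rw [Real.log_div two_ne_zero (ne_of_gt hγpos), hLdef]
          simp only []
          rw [one_div, Real.log_inv]
          ring
        have hlog2pos : (0:ℝ) < Real.log 2 := Real.log_pos one_lt_two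
        have hlogTpos : 0 < Real.log (T n) := by rw [hlogT]; linarith
        have hlognpos : 0 < Real.log n := Real.log_pos (by exact_mod_cast h2n)
        have hkey : (1 - ε) * (Real.log n / L n)
            ≤ Real.log (partCount m ν a (T n)) / Real.log (T n) := by
          have hNpos : (0:ℝ) < ((n:ℝ) + 1) := by positivity
          have hlogNn : Real.log ((n:ℝ) + 1) ≤ Real.log (partCount m ν a (T n)) := by
            apply Real.log_le_log hNpos
            exact_mod_cast hNn
          have h1 : (1 - ε) * (Real.log 2 + L n) ≤ L n := by
            rw [div_le_iff₀ hε] at hL2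
            nlinarith
          have h2 : (1 - ε) * (Real.log n / L n) ≤ Real.log n / (Real.log 2 + L n) := by
            rw [mul_div_assoc'] at *
            rw [div_le_div_iff₀ hLpos (by linarith)]
            nlinarith [hlognpos.le]
          have h3 : Real.log n / (Real.log 2 + L n)
              ≤ Real.log (partCount m ν a (T n)) / Real.log (T n) := by
            rw [hlogT]
            apply div_le_div_of_nonneg_right ?_ (by linarith)
            calc Real.log n ≤ Real.log ((n:ℝ) + 1) :=
                  Real.log_le_log (by positivity) (by linarith)
              _ ≤ _ := hlogNn
          exact h2.trans h3
        have hWn : W n = ENNReal.ofReal (Real.log n / L n) := by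
          rw [hWdef]
          simp only []
          rw [← ENNReal.ofReal_inv_of_pos (div_pos hLpos hlognpos)]
          congr 1
          simp only [hDdef, inv_div]
        rw [hWn, ← ENNReal.ofReal_mul (by linarith : (0:ℝ) ≤ 1 - ε)]
        exact ENNReal.ofReal_le_ofReal hkey
      calc ENNReal.ofReal (1 - ε) * limsup W atTop
          = limsup (fun n : ℕ => ENNReal.ofReal (1 - ε) * W n) atTop :=
            (ENNReal.limsup_const_mul_of_ne_top ENNReal.ofReal_ne_top).symm
        _ ≤ limsup (fun n : ℕ =>
              ENNReal.ofReal (Real.log (partCount m ν a (T n)) / Real.log (T n))) atTop :=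
            limsup_le_limsup hev
        _ ≤ limsup (fun t : ℝ =>
              ENNReal.ofReal (Real.log (partCount m ν a t) / Real.log t)) atTop :=
            comp_limsup_le (fun t : ℝ =>
              ENNReal.ofReal (Real.log (partCount m ν a t) / Real.log t)) hTtend
  · -- degenerate case: some γ vanishes
    push_neg at hpos
    rcases hpos with ⟨n0, hn01, hγle⟩
    have hγ0 : gammaA m ν a n0 = 0 := le_antisymm hγle gammaA_nonneg
    have hall : ∀ n, n0 ≤ n → gammaA m ν a n = 0 := fun n hn =>
      le_antisymm ((gammaA_antitone hn01 hn).trans (le_of_eq hγ0)) gammaA_nonneg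
    have hαtop : alphaA m ν a = ⊤ := by
      have hcongr : (fun n : ℕ => if gammaA m ν a n = 0 then (⊤ : ℝ≥0∞)
          else ENNReal.ofReal (Real.log (1 / gammaA m ν a n) / Real.log n))
            =ᶠ[atTop] (fun _ => (⊤ : ℝ≥0∞)) := by
        filter_upwards [eventually_ge_atTop n0] with n hn
        simp [hall n hn]
      rw [alphaA, liminf_congr hcongr, liminf_const]
    rw [hαtop, ENNReal.inv_top]
    -- `partCount` is bounded by `n0`, so the entropy vanishes
    have hNle : ∀ t : ℝ, 0 < t → partCount m ν a t ≤ n0 := fun t ht =>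
      partCount_le_of_gammaA_lt hn01 (by rw [hγ0]; positivity)
    have hb : ∀ᶠ t : ℝ in atTop,
        ENNReal.ofReal (Real.log (partCount m ν a t) / Real.log t)
          ≤ ENNReal.ofReal (Real.log n0 / Real.log t) := by
      filter_upwards [eventually_gt_atTop 1] with t ht
      have ht0 : (0:ℝ) < t := lt_trans one_pos ht
      apply ENNReal.ofReal_le_ofReal
      have hlogt : 0 < Real.log t := Real.log_pos ht
      have h1 : 1 ≤ partCount m ν a t := one_le_partCount hm ha ht0
      have hle : (partCount m ν a t : ℝ) ≤ (n0 : ℝ) := by exact_mod_cast hNle t ht0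
      have hpos' : (0:ℝ) < partCount m ν a t := by exact_mod_cast h1
      exact (div_le_div_iff_of_pos_right hlogt).mpr (Real.log_le_log hpos' hle)
    have hvlim : Tendsto (fun t : ℝ => ENNReal.ofReal (Real.log n0 / Real.log t))
        atTop (nhds 0) := by
      have hreal : Tendsto (fun t : ℝ => Real.log (n0 : ℝ) / Real.log t) atTop (nhds 0) :=
        Tendsto.div_atTop tendsto_const_nhds Real.tendsto_log_atTop
      have := (ENNReal.continuous_ofReal.tendsto 0).comp hreal
      simpa [Function.comp_def] using this
    have hle0 : hPart m ν a ≤ 0 := by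
      rw [hHeq]
      calc limsup (fun t : ℝ =>
            ENNReal.ofReal (Real.log (partCount m ν a t) / Real.log t)) atTop
          ≤ limsup (fun t : ℝ => ENNReal.ofReal (Real.log n0 / Real.log t)) atTop :=
            limsup_le_limsup hb
        _ = 0 := hvlim.limsup_eq
    exact le_antisymm hle0 zero_le
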